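/- Let z₁, …, z_{n+1} ∈ ℂ be the images of the vertices v₁, …, v_{n+1} of a regular n-simplex in ℝⁿ under an ℝ-linear map P : ℝⁿ → ℂ ≅ ℝ² whose two coordinate functionals form an orthonormal pair (an orthogonal projection). Then (z₁ + ⋯ + z_{n+1})² = (n+1)·(z₁² + ⋯ + z_{n+1}²). -/

import Mathlib

open Finset

theorem stmt6 (n : ℕ) (v : Fin (n + 1) → EuclideanSpace ℝ (Fin n))
    (d : ℝ) (hd : 0 < d) (hreg : ∀ i j, i ≠ j → dist (v i) (v j) = d)
    (a b : EuclideanSpace ℝ (Fin n))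
    (ha : ‖a‖ = 1) (hb : ‖b‖ = 1) (hab : (inner ℝ a b : ℝ) = 0)
    (z : Fin (n + 1) → ℂ)
    (hz : ∀ i, z i = ((inner ℝ a (v i) : ℝ) : ℂ)
        + Complex.I * ((inner ℝ b (v i) : ℝ) : ℂ)) :
    (∑ i, z i) ^ 2 = ((n : ℂ) + 1) * ∑ i, (z i) ^ 2 := by
  classical
  have hm : ((n : ℝ) + 1) ≠ 0 := by positivity
  set c : EuclideanSpace ℝ (Fin n) := (((n : ℝ) + 1)⁻¹) • ∑ i, v i with hc
  set u : Fin (n + 1) → EuclideanSpace ℝ (Fin n) := fun i => v i - c with hu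
  have hvu : ∀ i, v i = u i + c := fun i => by simp [hu]
  have husum : ∑ i, u i = 0 := by
    have h1 : ∑ i : Fin (n + 1), c = ((n : ℝ) + 1) • c := by
      rw [Finset.sum_const, card_univ, Fintype.card_fin, ← Nat.cast_smul_eq_nsmul ℝ]
      push_cast; ring_nf
    simp only [hu, Finset.sum_sub_distrib, h1]
    rw [hc, smul_smul, mul_inv_cancel₀ hm, one_smul, sub_self]
  have hdist : ∀ i j, i ≠ j → ‖u i - u j‖ = d := by
    intro i j hij
    have : u i - u j = v i - v j := by simp [hu]
    rw [this, ← dist_eq_norm]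
    exact hreg i j hij
  set N : ℝ := ∑ i, ‖u i‖ ^ 2 with hN
  have hrow : ∀ i, ((n : ℝ) + 1) * ‖u i‖ ^ 2 + N = n * d ^ 2 := by
    intro i
    have h1 : ∑ j, ‖u i - u j‖ ^ 2 = n * d ^ 2 := by
      have he : ∀ j ∈ univ, ‖u i - u j‖ ^ 2 = d ^ 2 - (if j = i then d ^ 2 else 0) := by
        intro j _
        by_cases h : j = i
        · simp [h]
        · rw [hdist i j (fun hh => h hh.symm)]; simp [h]
      rw [Finset.sum_congr rfl he, Finset.sum_sub_distrib, Finset.sum_ite_eq' univ i,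
        Finset.sum_const, card_univ, Fintype.card_fin]
      simp; push_cast; ring
    have h2 : ∀ j ∈ univ, ‖u i - u j‖ ^ 2
        = ‖u i‖ ^ 2 - 2 * (inner ℝ (u i) (u j) : ℝ) + ‖u j‖ ^ 2 := by
      intro j _; exact norm_sub_sq_real (u i) (u j)
    rw [Finset.sum_congr rfl h2, Finset.sum_add_distrib, Finset.sum_sub_distrib,
      ← Finset.mul_sum, ← inner_sum, husum, inner_zero_right, Finset.sum_const,
      card_univ, Fintype.card_fin] at h1
    rw [← h1]; push_cast; ring
  have hNval : N = n * d ^ 2 / 2 := by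
    have h1 : ∑ i, (((n : ℝ) + 1) * ‖u i‖ ^ 2 + N) = ∑ i : Fin (n + 1), (n * d ^ 2 : ℝ) :=
      Finset.sum_congr rfl fun i _ => hrow i
    rw [Finset.sum_add_distrib, ← Finset.mul_sum, ← hN, Finset.sum_const, card_univ,
      Fintype.card_fin, Finset.sum_const, card_univ, Fintype.card_fin, nsmul_eq_mul,
      nsmul_eq_mul] at h1
    push_cast at h1
    have : ((n : ℝ) + 1) * (2 * N) = ((n : ℝ) + 1) * (n * d ^ 2) := by ring_nf; ring_nf at h1; linarith
    have := mul_left_cancel₀ hm this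
    linarith
  have hKi : ∀ i, ‖u i‖ ^ 2 = n * d ^ 2 / (2 * ((n : ℝ) + 1)) := by
    intro i
    have h1 := hrow i
    rw [hNval] at h1
    field_simp
    linarith
  have hGram : ∀ i j, (inner ℝ (u i) (u j) : ℝ)
      = if i = j then n * d ^ 2 / (2 * ((n : ℝ) + 1)) else -d ^ 2 / (2 * ((n : ℝ) + 1)) := by
    intro i j
    by_cases h : i = j
    · subst h; simp only [if_pos rfl]
      rw [real_inner_self_eq_norm_sq]; exact hKi i
    · simp only [if_neg h]
      have h1 : ‖u i - u j‖ ^ 2 = d ^ 2 := by rw [hdist i j h]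
      rw [norm_sub_sq_real, hKi i, hKi j] at h1
      field_simp at h1 ⊢
      linarith
  -- eigen lemma
  have eigen : ∀ j, ∑ i, (inner ℝ (u i) (u j) : ℝ) • u i = (d ^ 2 / 2) • u j := by
    intro j
    have he : ∀ i ∈ univ, (inner ℝ (u i) (u j) : ℝ) • u i
        = (-d ^ 2 / (2 * ((n : ℝ) + 1))) • u i
          + (if i = j then (d ^ 2 / 2) • u j else 0) := by
      intro i _
      rw [hGram i j]
      by_cases h : i = j
      · subst h
        simp only [if_pos rfl, if_true]
        rw [← add_smul]
        congr 1
        field_simp; ring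
      · simp [h]
    rw [Finset.sum_congr rfl he, Finset.sum_add_distrib, ← Finset.smul_sum, husum,
      smul_zero, zero_add, Finset.sum_ite_eq' univ j]
    simp
  -- linear independence
  have hind : LinearIndependent ℝ (fun i : Fin n => u i.castSucc) := by
    rw [Fintype.linearIndependent_iff]
    intro g hg
    have hβ : (-d ^ 2 / (2 * ((n : ℝ) + 1))) ≠ 0 :=
      div_ne_zero (neg_ne_zero.mpr (pow_ne_zero 2 hd.ne')) (by positivity)
    have hS : ∑ i, g i = 0 := by
      have h0 : (inner ℝ (∑ i, g i • u i.castSucc) (u (Fin.last n)) : ℝ) = 0 := by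
        rw [hg, inner_zero_left]
      rw [sum_inner] at h0
      simp only [real_inner_smul_left] at h0
      have he : ∀ i ∈ univ, g i * (inner ℝ (u i.castSucc) (u (Fin.last n)) : ℝ)
          = g i * (-d ^ 2 / (2 * ((n : ℝ) + 1))) := by
        intro i _
        rw [hGram _ _, if_neg (Fin.castSucc_lt_last i).ne]
      rw [Finset.sum_congr rfl he, ← Finset.sum_mul] at h0
      exact (mul_eq_zero.mp h0).resolve_right hβ
    intro j
    have h0 : (inner ℝ (∑ i, g i • u i.castSucc) (u j.castSucc) : ℝ) = 0 := by
      rw [hg, inner_zero_left]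
    rw [sum_inner] at h0
    simp only [real_inner_smul_left] at h0
    have he : ∀ i ∈ univ, g i * (inner ℝ (u i.castSucc) (u j.castSucc) : ℝ)
        = g i * (-d ^ 2 / (2 * ((n : ℝ) + 1)))
          + (if i = j then g j * (d ^ 2 / 2) else 0) := by
      intro i _
      rw [hGram _ _]
      by_cases h : i = j
      · subst h
        rw [if_pos (by rfl), if_pos rfl]
        field_simp; ring
      · rw [if_neg (fun hh => h (Fin.castSucc_injective n hh)), if_neg h, add_zero]
    rw [Finset.sum_congr rfl he, Finset.sum_add_distrib, ← Finset.sum_mul, hS,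
      zero_mul, zero_add, Finset.sum_ite_eq' univ j] at h0
    simp only [mem_univ, if_pos] at h0
    have hd2 : (d ^ 2 / 2 : ℝ) ≠ 0 := by positivity
    exact (mul_eq_zero.mp h0).resolve_right hd2
  have hspan : Submodule.span ℝ (Set.range (fun i : Fin n => u i.castSucc)) = ⊤ :=
    hind.span_eq_top_of_card_eq_finrank' (by simp)
  have key : ∀ x : EuclideanSpace ℝ (Fin n),
      ∑ i, (inner ℝ (u i) x : ℝ) • u i = (d ^ 2 / 2) • x := by
    intro x
    have hx : x ∈ Submodule.span ℝ (Set.range (fun i : Fin n => u i.castSucc)) := by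
      rw [hspan]; exact Submodule.mem_top
    induction hx using Submodule.span_induction with
    | mem y hy => obtain ⟨j, rfl⟩ := hy; exact eigen _
    | zero => simp
    | add y w hy hw ihy ihw =>
      simp only [inner_add_right, add_smul, Finset.sum_add_distrib, ihy, ihw, smul_add]
    | smul r y hy ihy =>
      simp only [real_inner_smul_right, mul_smul, ← Finset.smul_sum, ihy]
      rw [smul_comm]
  -- projection sums
  set A : Fin (n + 1) → ℝ := fun i => inner ℝ a (u i) with hA
  set B : Fin (n + 1) → ℝ := fun i => inner ℝ b (u i) with hB
  have hsum2 : ∀ x y : EuclideanSpace ℝ (Fin n),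
      ∑ i, (inner ℝ x (u i) : ℝ) * (inner ℝ y (u i) : ℝ) = d ^ 2 / 2 * (inner ℝ x y : ℝ) := by
    intro x y
    have h0 := congrArg (fun w => (inner ℝ x w : ℝ)) (key y)
    simp only [inner_sum, real_inner_smul_right] at h0
    rw [← h0]
    refine Finset.sum_congr rfl fun i _ => ?_
    rw [real_inner_comm (u i) y]; ring
  have hAA : ∑ i, A i ^ 2 = d ^ 2 / 2 := by
    have := hsum2 a a
    rw [real_inner_self_eq_norm_sq, ha] at this
    simpa [hA, sq] using this
  have hBB : ∑ i, B i ^ 2 = d ^ 2 / 2 := by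
    have := hsum2 b b
    rw [real_inner_self_eq_norm_sq, hb] at this
    simpa [hB, sq] using this
  have hABs : ∑ i, A i * B i = 0 := by
    have := hsum2 a b
    rw [hab] at this
    simpa [hA, hB] using this
  have hA0 : ∑ i, A i = 0 := by
    simp only [hA, ← inner_sum, husum, inner_zero_right]
  have hB0 : ∑ i, B i = 0 := by
    simp only [hB, ← inner_sum, husum, inner_zero_right]
  set pa : ℝ := inner ℝ a c with hpa
  set pb : ℝ := inner ℝ b c with hpb
  have hzi : ∀ i, z i = ((A i + pa : ℝ) : ℂ) + Complex.I * ((B i + pb : ℝ) : ℂ) := by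
    intro i
    rw [hz i, hvu i, inner_add_right, inner_add_right]
  -- real sums
  have SA : ∑ i, (A i + pa) = ((n : ℝ) + 1) * pa := by
    rw [Finset.sum_add_distrib, hA0, Finset.sum_const, card_univ, Fintype.card_fin,
      nsmul_eq_mul]
    push_cast; ring
  have SB : ∑ i, (B i + pb) = ((n : ℝ) + 1) * pb := by
    rw [Finset.sum_add_distrib, hB0, Finset.sum_const, card_univ, Fintype.card_fin,
      nsmul_eq_mul]
    push_cast; ring
  have QA : ∑ i, (A i + pa) ^ 2 = d ^ 2 / 2 + ((n : ℝ) + 1) * pa ^ 2 := by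
    have he : ∀ i ∈ univ, (A i + pa) ^ 2 = A i ^ 2 + A i * (2 * pa) + pa ^ 2 :=
      fun i _ => by ring
    rw [Finset.sum_congr rfl he, Finset.sum_add_distrib, Finset.sum_add_distrib,
      ← Finset.sum_mul, hAA, hA0, Finset.sum_const, card_univ, Fintype.card_fin,
      nsmul_eq_mul]
    push_cast; ring
  have QB : ∑ i, (B i + pb) ^ 2 = d ^ 2 / 2 + ((n : ℝ) + 1) * pb ^ 2 := by
    have he : ∀ i ∈ univ, (B i + pb) ^ 2 = B i ^ 2 + B i * (2 * pb) + pb ^ 2 :=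
      fun i _ => by ring
    rw [Finset.sum_congr rfl he, Finset.sum_add_distrib, Finset.sum_add_distrib,
      ← Finset.sum_mul, hBB, hB0, Finset.sum_const, card_univ, Fintype.card_fin,
      nsmul_eq_mul]
    push_cast; ring
  have QAB : ∑ i, (A i + pa) * (B i + pb) = ((n : ℝ) + 1) * (pa * pb) := by
    have he : ∀ i ∈ univ, (A i + pa) * (B i + pb)
        = A i * B i + A i * pb + B i * pa + pa * pb := fun i _ => by ring
    rw [Finset.sum_congr rfl he, Finset.sum_add_distrib, Finset.sum_add_distrib,
      Finset.sum_add_distrib, hABs, ← Finset.sum_mul, ← Finset.sum_mul, hA0, hB0,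
      Finset.sum_const, card_univ, Fintype.card_fin, nsmul_eq_mul]
    push_cast; ring
  -- complex computation
  have hzsum : ∑ i, z i = ((((n : ℝ) + 1) * pa : ℝ) : ℂ)
      + Complex.I * ((((n : ℝ) + 1) * pb : ℝ) : ℂ) := by
    rw [Finset.sum_congr rfl (fun i _ => hzi i), Finset.sum_add_distrib,
      ← Finset.mul_sum, ← Complex.ofReal_sum, ← Complex.ofReal_sum, SA, SB]
  have hz2 : ∀ i, z i ^ 2 = (((A i + pa) ^ 2 - (B i + pb) ^ 2 : ℝ) : ℂ)
      + Complex.I * ((2 * ((A i + pa) * (B i + pb)) : ℝ) : ℂ) := by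
    intro i
    rw [hzi i]
    push_cast
    linear_combination ((B i : ℂ) + (pb : ℂ)) ^ 2 * Complex.I_sq
  have hzsq : ∑ i, z i ^ 2
      = ((((n : ℝ) + 1) * pa ^ 2 - ((n : ℝ) + 1) * pb ^ 2 : ℝ) : ℂ)
        + Complex.I * ((2 * (((n : ℝ) + 1) * (pa * pb)) : ℝ) : ℂ) := by
    rw [Finset.sum_congr rfl (fun i _ => hz2 i), Finset.sum_add_distrib,
      ← Finset.mul_sum, ← Complex.ofReal_sum, ← Complex.ofReal_sum,
      Finset.sum_sub_distrib, ← Finset.mul_sum, QA, QB, QAB]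
    push_cast
    ring_nf
  rw [hzsum, hzsq]
  push_cast
  linear_combination ((n : ℂ) + 1) ^ 2 * (pb : ℂ) ^ 2 * Complex.I_sq
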